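/- Every positive integer k with k ≡ 8007257 (mod 11184810) is a Sierpiński number. -/
import Mathlib

/-- A number is composite if it is a product of two integers greater than 1. -/
def IsComposite (n : ℕ) : Prop := ∃ a b : ℕ, 1 < a ∧ 1 < b ∧ n = a * b

/-- A Sierpiński number is an odd positive integer `k` such that `k·2^n + 1` is composite
for every positive integer `n`. -/
def IsSierpinski (k : ℕ) : Prop := 0 < k ∧ Odd k ∧ ∀ n : ℕ, 0 < n → IsComposite (k * 2 ^ n + 1)

lemma cover (r : ℕ) (hr : r < 24) :
    ∃ p : ℕ, p ∣ 11184810 ∧ 1 < p ∧ p ≤ 241 ∧ 2 ^ 24 ≡ 1 [MOD p] ∧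
      (8007257 * 2 ^ r + 1) % p = 0 := by
  interval_cases r
  · exact ⟨3, by decide⟩
  · exact ⟨5, by decide⟩
  · exact ⟨3, by decide⟩
  · exact ⟨7, by decide⟩
  · exact ⟨3, by decide⟩
  · exact ⟨5, by decide⟩
  · exact ⟨3, by decide⟩
  · exact ⟨241, by decide⟩
  · exact ⟨3, by decide⟩
  · exact ⟨5, by decide⟩
  · exact ⟨3, by decide⟩
  · exact ⟨13, by decide⟩
  · exact ⟨3, by decide⟩
  · exact ⟨5, by decide⟩
  · exact ⟨3, by decide⟩
  · exact ⟨7, by decide⟩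
  · exact ⟨3, by decide⟩
  · exact ⟨5, by decide⟩
  · exact ⟨3, by decide⟩
  · exact ⟨17, by decide⟩
  · exact ⟨3, by decide⟩
  · exact ⟨5, by decide⟩
  · exact ⟨3, by decide⟩
  · exact ⟨13, by decide⟩

/-- Every positive integer `k` with `k ≡ 8007257 (mod 11184810)` is a
Sierpiński number. -/
theorem stmt_5 (k : ℕ) (hk : 0 < k) (hmod : k ≡ 8007257 [MOD 11184810]) :
    IsSierpinski k := by
  have hkge : 8007257 ≤ k := by
    have := hmod.symm
    unfold Nat.ModEq at this
    have h2 : k % 11184810 ≤ k := Nat.mod_le _ _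
    omega
  refine ⟨hk, ?_, ?_⟩
  · have h2 : k ≡ 8007257 [MOD 2] := hmod.of_dvd (by norm_num)
    unfold Nat.ModEq at h2
    exact Nat.odd_iff.mpr (by omega)
  · intro n hn
    obtain ⟨p, hpd, hp1, hp241, h24, hz⟩ := cover (n % 24) (Nat.mod_lt _ (by norm_num))
    have hkp : k ≡ 8007257 [MOD p] := hmod.of_dvd hpd
    have h2n : (2:ℕ) ^ n ≡ 2 ^ (n % 24) [MOD p] := by
      conv_lhs => rw [← Nat.div_add_mod n 24]
      rw [pow_add, pow_mul]
      calc ((2:ℕ)^24) ^ (n/24) * 2 ^ (n % 24)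
          ≡ 1 ^ (n/24) * 2 ^ (n % 24) [MOD p] := ((h24.pow _).mul_right _)
        _ = 2 ^ (n % 24) := by rw [one_pow, one_mul]
    have hdvd : p ∣ k * 2 ^ n + 1 := by
      have : k * 2 ^ n + 1 ≡ 8007257 * 2 ^ (n % 24) + 1 [MOD p] := (hkp.mul h2n).add_right 1
      have := this.trans (show 8007257 * 2 ^ (n % 24) + 1 ≡ 0 [MOD p] by
        unfold Nat.ModEq; simpa using hz)
      exact (Nat.modEq_zero_iff_dvd).mp this
    obtain ⟨b, hb⟩ := hdvd
    have hNbig : p < k * 2 ^ n + 1 := by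
      have h2n1 : 2 ≤ 2 ^ n := by
        calc 2 = 2^1 := rfl
        _ ≤ 2^n := Nat.pow_le_pow_right (by norm_num) hn
      have : 8007257 * 2 ≤ k * 2 ^ n := Nat.mul_le_mul hkge h2n1
      omega
    refine ⟨p, b, hp1, ?_, hb⟩
    nlinarith [hb, hNbig, hp1]
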